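/- Let V be a finite-dimensional complex vector space and let A_{ij} ∈ End(V), 1 ≤ i, j ≤ n, satisfy A_{ii} = 0 and A_{ij} = A_{ji}. For z ∈ ℂⁿ with pairwise distinct coordinates and u ∈ ℂⁿ, set ω_z(u) = Σ_{1≤i<j≤n} ((u_i − u_j)/(z_i − z_j)) · A_{ij} ∈ End(V). Then the connection with connection form ω = Σ_{i<j} (dz_i − dz_j)/(z_i − z_j) ⊗ A_{ij} on the trivial V-bundle over ℂⁿ_* is flat — equivalently, ω_z(u) ∘ ω_z(v) = ω_z(v) ∘ ω_z(u) for all z ∈ ℂⁿ with pairwise distinct coordinates and all u, v ∈ ℂⁿ — if and only if the A_{ij} satisfy the infinitesimal braid relations: [A_{ij}, A_{kl}] = 0 whenever {i,j} ∩ {k,l} = ∅, and [A_{ij}, A_{ij} + A_{jk} + A_{ki}] = 0 whenever i, j, k are pairwise distinct. -/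
import Mathlib

/-- The value of the connection form
`ω = ∑_{i<j} (dz_i − dz_j)/(z_i − z_j) ⊗ A_{ij}` at the point `z`, evaluated on the
tangent vector `u`; an endomorphism of `V`. -/
noncomputable def omegaEnd (n : ℕ) (V : Type*) [AddCommGroup V] [Module ℂ V]
    (A : Fin n → Fin n → Module.End ℂ V) (z u : Fin n → ℂ) : Module.End ℂ V :=
  ∑ p ∈ Finset.univ.filter (fun p : Fin n × Fin n => p.1 < p.2),
    ((u p.1 - u p.2) / (z p.1 - z p.2)) • A p.1 p.2

open Finset MvPolynomial

namespace Kohno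

variable {n : ℕ} {V : Type*} [AddCommGroup V] [Module ℂ V]

noncomputable def fr (z u : Fin n → ℂ) (i j : Fin n) : ℂ := (u i - u j) / (z i - z j)

lemma fr_symm (z u : Fin n → ℂ) (i j : Fin n) : fr z u j i = fr z u i j := by
  unfold fr; rw [← neg_div_neg_eq]; ring_nf

lemma fr_self (z u : Fin n → ℂ) (i : Fin n) : fr z u i i = 0 := by simp [fr]

lemma two_smul_omega (A : Fin n → Fin n → Module.End ℂ V)
    (hAsymm : ∀ i j, A i j = A j i) (z u : Fin n → ℂ) :
    (2 : ℂ) • omegaEnd n V A z u = ∑ p : Fin n × Fin n, fr z u p.1 p.2 • A p.1 p.2 := by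
  classical
  set t : Fin n × Fin n → Module.End ℂ V := fun p => fr z u p.1 p.2 • A p.1 p.2 with ht
  have hsplit : ∑ p ∈ univ.filter (fun p : Fin n × Fin n => p.1 < p.2), t p
      + ∑ p ∈ univ.filter (fun p : Fin n × Fin n => ¬ p.1 < p.2), t p
      = ∑ p : Fin n × Fin n, t p := Finset.sum_filter_add_sum_filter_not _ _ _
  have hsplit2 : ∑ p ∈ (univ.filter (fun p : Fin n × Fin n => ¬ p.1 < p.2)).filter
        (fun p : Fin n × Fin n => p.2 < p.1), t p
      + ∑ p ∈ (univ.filter (fun p : Fin n × Fin n => ¬ p.1 < p.2)).filter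
        (fun p : Fin n × Fin n => ¬ p.2 < p.1), t p
      = ∑ p ∈ univ.filter (fun p : Fin n × Fin n => ¬ p.1 < p.2), t p :=
    Finset.sum_filter_add_sum_filter_not _ _ _
  have hdiag : ∑ p ∈ (univ.filter (fun p : Fin n × Fin n => ¬ p.1 < p.2)).filter
        (fun p : Fin n × Fin n => ¬ p.2 < p.1), t p = 0 := by
    apply Finset.sum_eq_zero
    intro p hp
    simp only [mem_filter, mem_univ, true_and] at hp
    have : p.1 = p.2 := le_antisymm (not_lt.mp hp.2) (not_lt.mp hp.1)
    simp [ht, ← this, fr_self]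
  have hgt : ∑ p ∈ (univ.filter (fun p : Fin n × Fin n => ¬ p.1 < p.2)).filter
        (fun p : Fin n × Fin n => p.2 < p.1), t p
      = ∑ p ∈ univ.filter (fun p : Fin n × Fin n => p.1 < p.2), t p := by
    apply Finset.sum_nbij' (i := Prod.swap) (j := Prod.swap)
    · intro p hp; simp only [mem_filter, mem_univ, true_and] at hp ⊢; exact hp.2
    · intro p hp; simp only [mem_filter, mem_univ, true_and] at hp ⊢
      exact ⟨not_lt.mpr hp.le, hp⟩
    · intro p _; simp
    · intro p _; simp
    · intro p hp
      show t p = t p.swap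
      have h1 : fr z u p.2 p.1 = fr z u p.1 p.2 := fr_symm z u p.1 p.2
      simp only [ht, Prod.fst_swap, Prod.snd_swap, h1, hAsymm p.1 p.2]
  have : ∑ p : Fin n × Fin n, t p
      = (2 : ℂ) • ∑ p ∈ univ.filter (fun p : Fin n × Fin n => p.1 < p.2), t p := by
    rw [← hsplit, ← hsplit2, hdiag, hgt, two_smul, add_zero]
  rw [this]
  rfl

/-- single unit vector -/
lemma omega_single (A : Fin n → Fin n → Module.End ℂ V)
    (hAsymm : ∀ i j, A i j = A j i) (z : Fin n → ℂ) (i : Fin n) :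
    omegaEnd n V A z (fun m => if m = i then 1 else 0)
      = ∑ b, (z i - z b)⁻¹ • A i b := by
  classical
  have key := two_smul_omega A hAsymm z (fun m => if m = i then 1 else 0)
  rw [Fintype.sum_prod_type] at key
  have hterm : ∀ a b : Fin n, fr z (fun m => if m = i then 1 else 0) a b • A a b
      = ((if a = i then (z a - z b)⁻¹ else 0) • A a b
        + (if b = i then (z b - z a)⁻¹ else 0) • A a b) := by
    intro a b
    rcases eq_or_ne a i with ha | ha <;> rcases eq_or_ne b i with hb | hb
    · subst ha; rw [hb]
      simp [fr]
    · subst ha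
      simp only [if_pos rfl, if_neg hb, add_zero, fr, if_pos rfl, if_neg hb]
      norm_num [div_eq_mul_inv]
    · subst hb
      simp only [if_neg ha, if_pos rfl, zero_add, fr, if_neg ha, if_pos rfl]
      norm_num [neg_div, one_div]
      rw [← neg_smul, ← inv_neg, neg_sub]
    · simp [fr, ha, hb]
  have h2 : (2:ℂ) • omegaEnd n V A z (fun m => if m = i then 1 else 0)
      = (2:ℂ) • ∑ b, (z i - z b)⁻¹ • A i b := by
    rw [key]
    have hx : ∀ x : Fin n, ∑ y, fr z (fun m => if m = i then 1 else 0) x y • A x y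
        = (if x = i then ∑ y, (z x - z y)⁻¹ • A x y else 0) + (z i - z x)⁻¹ • A x i := by
      intro x
      rw [Finset.sum_congr rfl (fun y _ => hterm x y), Finset.sum_add_distrib]
      congr 1
      · by_cases hxi : x = i
        · simp [hxi]
        · simp [hxi]
      · simp
    rw [Finset.sum_congr rfl (fun x _ => hx x), Finset.sum_add_distrib]
    have e1 : ∑ x : Fin n, (if x = i then ∑ y, (z x - z y)⁻¹ • A x y else 0)
        = ∑ y, (z i - z y)⁻¹ • A i y := by simp
    have e2 : ∑ x : Fin n, (z i - z x)⁻¹ • A x i = ∑ x : Fin n, (z i - z x)⁻¹ • A i x :=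
      Finset.sum_congr rfl fun x _ => by rw [hAsymm x i]
    rw [e1, e2, two_smul]
  exact smul_right_injective (Module.End ℂ V) two_ne_zero h2

lemma sum_smul_mul_sum_smul {ι κ : Type*} (s : Finset ι) (t : Finset κ)
    (f : ι → ℂ) (g : κ → ℂ) (B : ι → Module.End ℂ V) (C : κ → Module.End ℂ V) :
    (∑ x ∈ s, f x • B x) * (∑ y ∈ t, g y • C y)
      = ∑ x ∈ s, ∑ y ∈ t, (f x * g y) • (B x * C y) := by
  rw [Finset.sum_mul_sum]
  exact Finset.sum_congr rfl fun x _ => Finset.sum_congr rfl fun y _ =>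
    smul_mul_smul_comm _ _ _ _

lemma flat_scalar (A : Fin n → Fin n → Module.End ℂ V)
    (hAsymm : ∀ i j, A i j = A j i)
    (H : ∀ z : Fin n → ℂ, Function.Injective z → ∀ u v : Fin n → ℂ,
        omegaEnd n V A z u * omegaEnd n V A z v = omegaEnd n V A z v * omegaEnd n V A z u)
    (i k : Fin n) (φ : Module.Dual ℂ (Module.End ℂ V))
    (z : Fin n → ℂ) (hz : Function.Injective z) :
    ∑ a, ∑ b, ((z i - z a)⁻¹ * (z k - z b)⁻¹) * φ (A i a * A k b - A k b * A i a) = 0 := by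
  classical
  have h := H z hz (fun m => if m = i then 1 else 0) (fun m => if m = k then 1 else 0)
  rw [omega_single A hAsymm z i, omega_single A hAsymm z k] at h
  have e1 := sum_smul_mul_sum_smul (V := V) univ univ (fun a => (z i - z a)⁻¹)
    (fun b => (z k - z b)⁻¹) (fun a => A i a) (fun b => A k b)
  have e2 := sum_smul_mul_sum_smul (V := V) univ univ (fun b => (z k - z b)⁻¹)
    (fun a => (z i - z a)⁻¹) (fun b => A k b) (fun a => A i a)
  have e2' : ∑ a : Fin n, ∑ b : Fin n, ((z i - z a)⁻¹ * (z k - z b)⁻¹) • (A k b * A i a)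
      = (∑ b, (z k - z b)⁻¹ • A k b) * (∑ a, (z i - z a)⁻¹ • A i a) := by
    rw [e2, Finset.sum_comm]
    exact Finset.sum_congr rfl fun a _ => Finset.sum_congr rfl fun b _ => by
      rw [mul_comm]
  have h2 : ∑ a : Fin n, ∑ b : Fin n,
      ((z i - z a)⁻¹ * (z k - z b)⁻¹) • (A i a * A k b - A k b * A i a) = 0 := by
    simp only [smul_sub, Finset.sum_sub_distrib]
    rw [← e1, e2', h, sub_self]
  have h3 := congrArg φ h2
  simpa [map_sum, map_smul, smul_eq_mul] using h3

lemma z0_injective : Function.Injective (fun m : Fin n => ((m : ℕ) : ℂ)) := by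
  intro a b h
  exact Fin.val_injective (Nat.cast_injective h)

lemma poly_step (i k : Fin n) (c : Fin n → Fin n → ℂ)
    (hc : ∀ z : Fin n → ℂ, Function.Injective z →
      ∑ a, ∑ b, ((z i - z a)⁻¹ * (z k - z b)⁻¹) * c a b = 0) :
    ∀ ζ : Fin n → ℂ,
      ∑ a ∈ univ.erase i, ∑ b ∈ univ.erase k,
        ((∏ m ∈ (univ.erase i).erase a, (ζ i - ζ m)) *
         (∏ m ∈ (univ.erase k).erase b, (ζ k - ζ m))) * c a b = 0 := by
  classical
  set P : MvPolynomial (Fin n) ℂ :=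
    ∑ a ∈ univ.erase i, ∑ b ∈ univ.erase k,
      ((∏ m ∈ (univ.erase i).erase a, (X i - X m)) *
       (∏ m ∈ (univ.erase k).erase b, (X k - X m))) * C (c a b) with hP
  have hevalP : ∀ ζ : Fin n → ℂ, eval ζ P =
      ∑ a ∈ univ.erase i, ∑ b ∈ univ.erase k,
        ((∏ m ∈ (univ.erase i).erase a, (ζ i - ζ m)) *
         (∏ m ∈ (univ.erase k).erase b, (ζ k - ζ m))) * c a b := by
    intro ζ
    simp [hP, map_sum, map_prod, eval_X, eval_C]
  have hPz : ∀ z : Fin n → ℂ, Function.Injective z → eval z P = 0 := by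
    intro z hz
    rw [hevalP]
    have key : ∀ a ∈ univ.erase i, ∀ b ∈ univ.erase k,
        ((∏ m ∈ (univ.erase i).erase a, (z i - z m)) *
         (∏ m ∈ (univ.erase k).erase b, (z k - z m))) * c a b
        = ((∏ m ∈ univ.erase i, (z i - z m)) * (∏ m ∈ univ.erase k, (z k - z m))) *
          (((z i - z a)⁻¹ * (z k - z b)⁻¹) * c a b) := by
      intro a ha b hb
      have hai : (z i - z a) ≠ 0 := sub_ne_zero.mpr (fun h => (mem_erase.mp ha).1 (hz h).symm)
      have hbk : (z k - z b) ≠ 0 := sub_ne_zero.mpr (fun h => (mem_erase.mp hb).1 (hz h).symm)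
      have h1 : (z i - z a) * ∏ m ∈ (univ.erase i).erase a, (z i - z m)
          = ∏ m ∈ univ.erase i, (z i - z m) := Finset.mul_prod_erase _ (fun m => z i - z m) ha
      have h2 : (z k - z b) * ∏ m ∈ (univ.erase k).erase b, (z k - z m)
          = ∏ m ∈ univ.erase k, (z k - z m) := Finset.mul_prod_erase _ (fun m => z k - z m) hb
      field_simp
      rw [← h1, ← h2]
      ring
    calc ∑ a ∈ univ.erase i, ∑ b ∈ univ.erase k,
          ((∏ m ∈ (univ.erase i).erase a, (z i - z m)) *
           (∏ m ∈ (univ.erase k).erase b, (z k - z m))) * c a b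
        = ∑ a ∈ univ.erase i, ∑ b ∈ univ.erase k,
          ((∏ m ∈ univ.erase i, (z i - z m)) * (∏ m ∈ univ.erase k, (z k - z m))) *
            (((z i - z a)⁻¹ * (z k - z b)⁻¹) * c a b) :=
          Finset.sum_congr rfl fun a ha => Finset.sum_congr rfl fun b hb => key a ha b hb
      _ = ((∏ m ∈ univ.erase i, (z i - z m)) * (∏ m ∈ univ.erase k, (z k - z m))) *
          ∑ a ∈ univ.erase i, ∑ b ∈ univ.erase k,
            ((z i - z a)⁻¹ * (z k - z b)⁻¹) * c a b := by
          rw [Finset.mul_sum]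
          exact Finset.sum_congr rfl fun a _ => by rw [Finset.mul_sum]
      _ = 0 := by
          have hbext : ∀ a : Fin n, ∑ b ∈ univ.erase k, ((z i - z a)⁻¹ * (z k - z b)⁻¹) * c a b
              = ∑ b, ((z i - z a)⁻¹ * (z k - z b)⁻¹) * c a b := by
            intro a
            apply Finset.sum_erase
            simp
          have haext : ∑ a ∈ univ.erase i, ∑ b, ((z i - z a)⁻¹ * (z k - z b)⁻¹) * c a b
              = ∑ a, ∑ b, ((z i - z a)⁻¹ * (z k - z b)⁻¹) * c a b := by
            apply Finset.sum_erase
            simp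
          rw [Finset.sum_congr rfl fun a _ => hbext a, haext, hc z hz, mul_zero]
  -- Vandermonde factor
  set W : MvPolynomial (Fin n) ℂ :=
    ∏ p ∈ univ.filter (fun p : Fin n × Fin n => p.1 ≠ p.2), (X p.1 - X p.2) with hW
  have hPW : P * W = 0 := by
    apply MvPolynomial.funext
    intro z
    rw [map_mul, map_zero]
    by_cases hz : Function.Injective z
    · rw [hPz z hz, zero_mul]
    · have : eval z W = 0 := by
        rw [Function.not_injective_iff] at hz
        obtain ⟨a, b, hab, hne⟩ := hz
        rw [hW]
        rw [map_prod]
        apply Finset.prod_eq_zero (i := (a, b))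
        · simp [hne]
        · simp [sub_eq_zero, hab]
      rw [this, mul_zero]
  have hWne : W ≠ 0 := by
    intro h0
    have := congrArg (eval (fun m : Fin n => ((m : ℕ) : ℂ))) h0
    rw [map_zero, hW, map_prod] at this
    have hne : ∀ p ∈ univ.filter (fun p : Fin n × Fin n => p.1 ≠ p.2),
        eval (fun m : Fin n => ((m : ℕ) : ℂ)) (X p.1 - X p.2) ≠ 0 := by
      intro p hp
      simp only [mem_filter, mem_univ, true_and] at hp
      simp only [map_sub, eval_X]
      exact sub_ne_zero.mpr (fun h => hp (z0_injective h))
    exact Finset.prod_ne_zero_iff.mpr hne this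
  have hP0 : P = 0 := by
    rcases mul_eq_zero.mp hPW with h | h
    · exact h
    · exact absurd h hWne
  intro ζ
  have := hevalP ζ
  rw [hP0, map_zero] at this
  exact this.symm


lemma forward_disjoint (i j k l : Fin n) (c : Fin n → Fin n → ℂ)
    (hc : ∀ z : Fin n → ℂ, Function.Injective z →
      ∑ a, ∑ b, ((z i - z a)⁻¹ * (z k - z b)⁻¹) * c a b = 0)
    (hij : i ≠ j) (hik : i ≠ k) (hil : i ≠ l) (hjk : j ≠ k) (hjl : j ≠ l) (hkl : k ≠ l) :
    c j l = 0 := by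
  classical
  set z0 : Fin n → ℂ := fun m => ((m : ℕ) : ℂ) with hz0
  set ζ : Fin n → ℂ := fun m => if m = j then z0 i else if m = l then z0 k else z0 m with hζ
  have hζj : ζ j = z0 i := by simp [hζ]
  have hζl : ζ l = z0 k := by simp [hζ, Ne.symm hjl, (show l ≠ j from fun h => hjl h.symm)]
  have hζi : ζ i = z0 i := by simp [hζ, hij, hil]
  have hζk : ζ k = z0 k := by simp [hζ, (show k ≠ j from fun h => hjk h.symm), hkl]
  have hζm : ∀ m : Fin n, m ≠ j → m ≠ l → ζ m = z0 m := by
    intro m h1 h2; simp [hζ, h1, h2]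
  have hgoal := poly_step i k c hc ζ
  rw [Finset.sum_eq_single_of_mem j (mem_erase.mpr ⟨hij.symm, mem_univ j⟩)] at hgoal
  · rw [Finset.sum_eq_single_of_mem l (mem_erase.mpr ⟨hkl.symm, mem_univ l⟩)] at hgoal
    · -- hgoal : (Pj * Ql) * c j l = 0
      have hPj : (∏ m ∈ (univ.erase i).erase j, (ζ i - ζ m)) ≠ 0 := by
        rw [Finset.prod_ne_zero_iff]
        intro m hm
        rw [mem_erase, mem_erase] at hm
        obtain ⟨hmj, hmi, -⟩ := hm
        rw [hζi]
        by_cases hml : m = l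
        · rw [hml, hζl]
          exact sub_ne_zero.mpr (fun h => hik (z0_injective h))
        · rw [hζm m hmj hml]
          exact sub_ne_zero.mpr (fun h => hmi (z0_injective h).symm)
      have hQl : (∏ m ∈ (univ.erase k).erase l, (ζ k - ζ m)) ≠ 0 := by
        rw [Finset.prod_ne_zero_iff]
        intro m hm
        rw [mem_erase, mem_erase] at hm
        obtain ⟨hml, hmk, -⟩ := hm
        rw [hζk]
        by_cases hmj : m = j
        · rw [hmj, hζj]
          exact sub_ne_zero.mpr (fun h => hik (z0_injective h).symm)
        · rw [hζm m hmj hml]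
          exact sub_ne_zero.mpr (fun h => hmk (z0_injective h).symm)
      have := mul_ne_zero hPj hQl
      rcases mul_eq_zero.mp hgoal with h | h
      · exact absurd h this
      · exact h
    · -- other b vanish
      intro b hb hbl
      have : (∏ m ∈ (univ.erase k).erase b, (ζ k - ζ m)) = 0 := by
        apply Finset.prod_eq_zero (i := l)
        · rw [mem_erase, mem_erase]
          exact ⟨fun h => hbl h.symm, hkl.symm, mem_univ l⟩
        · rw [hζk, hζl, sub_self]
      rw [this, mul_zero, zero_mul]
  · -- other a vanish (whole inner sum)
    intro a ha haj
    apply Finset.sum_eq_zero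
    intro b hb
    have : (∏ m ∈ (univ.erase i).erase a, (ζ i - ζ m)) = 0 := by
      apply Finset.prod_eq_zero (i := j)
      · rw [mem_erase, mem_erase]
        exact ⟨fun h => haj h.symm, hij.symm, mem_univ j⟩
      · rw [hζi, hζj, sub_self]
    rw [this, zero_mul, zero_mul]

lemma forward_triple (i j k : Fin n) (c : Fin n → Fin n → ℂ)
    (hc : ∀ z : Fin n → ℂ, Function.Injective z →
      ∑ a, ∑ b, ((z i - z a)⁻¹ * (z k - z b)⁻¹) * c a b = 0)
    (hvan : ∀ b : Fin n, b ≠ i → b ≠ j → b ≠ k → c j b = 0)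
    (hij : i ≠ j) (hjk : j ≠ k) (hik : i ≠ k) :
    c j i + c j j = 0 := by
  classical
  set z0 : Fin n → ℂ := fun m => ((m : ℕ) : ℂ) with hz0
  set ζ : Fin n → ℂ := fun m => if m = j then z0 i else z0 m with hζ
  have hζj : ζ j = z0 i := by simp [hζ]
  have hζm : ∀ m : Fin n, m ≠ j → ζ m = z0 m := by intro m h1; simp [hζ, h1]
  have hζi : ζ i = z0 i := hζm i hij
  have hζk : ζ k = z0 k := hζm k (fun h => hjk h.symm)
  have hgoal := poly_step i k c hc ζ
  rw [Finset.sum_eq_single_of_mem j (mem_erase.mpr ⟨hij.symm, mem_univ j⟩)] at hgoal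
  · -- hgoal : ∑ b ∈ univ.erase k, (Pj * Qb) * c j b = 0
    have hsub : ({i, j} : Finset (Fin n)) ⊆ univ.erase k := by
      intro x hx
      rw [Finset.mem_insert, Finset.mem_singleton] at hx
      rcases hx with h | h
      · rw [h]; exact mem_erase.mpr ⟨hik, mem_univ i⟩
      · rw [h]; exact mem_erase.mpr ⟨hjk, mem_univ j⟩
    rw [← Finset.sum_subset hsub] at hgoal
    · rw [Finset.sum_pair hij] at hgoal
      -- Qi = Qj
      have hQQ : (∏ m ∈ (univ.erase k).erase i, (ζ k - ζ m))
          = (∏ m ∈ (univ.erase k).erase j, (ζ k - ζ m)) := by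
        have hjm : j ∈ ((univ.erase k).erase i) :=
          mem_erase.mpr ⟨hij.symm, mem_erase.mpr ⟨hjk, mem_univ j⟩⟩
        have him : i ∈ ((univ.erase k).erase j) :=
          mem_erase.mpr ⟨hij, mem_erase.mpr ⟨hik, mem_univ i⟩⟩
        rw [← Finset.mul_prod_erase _ (fun m => ζ k - ζ m) hjm,
            ← Finset.mul_prod_erase _ (fun m => ζ k - ζ m) him,
            Finset.erase_right_comm, hζi, hζj]
      have hPj : (∏ m ∈ (univ.erase i).erase j, (ζ i - ζ m)) ≠ 0 := by
        rw [Finset.prod_ne_zero_iff]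
        intro m hm
        rw [mem_erase, mem_erase] at hm
        obtain ⟨hmj, hmi, -⟩ := hm
        rw [hζi, hζm m hmj]
        exact sub_ne_zero.mpr (fun h => hmi (z0_injective h).symm)
      have hQi : (∏ m ∈ (univ.erase k).erase i, (ζ k - ζ m)) ≠ 0 := by
        rw [Finset.prod_ne_zero_iff]
        intro m hm
        rw [mem_erase, mem_erase] at hm
        obtain ⟨hmi, hmk, -⟩ := hm
        rw [hζk]
        by_cases hmj : m = j
        · rw [hmj, hζj]
          exact sub_ne_zero.mpr (fun h => hik (z0_injective h).symm)
        · rw [hζm m hmj]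
          exact sub_ne_zero.mpr (fun h => hmk (z0_injective h).symm)
      have hfac : ((∏ m ∈ (univ.erase i).erase j, (ζ i - ζ m)) *
            (∏ m ∈ (univ.erase k).erase i, (ζ k - ζ m))) * (c j i + c j j) = 0 := by
        rw [mul_add]
        nth_rewrite 2 [hQQ]
        exact hgoal
      rcases mul_eq_zero.mp hfac with h | h
      · exact absurd h (mul_ne_zero hPj hQi)
      · exact h
    · intro b hb hbnot
      rw [Finset.mem_insert, Finset.mem_singleton] at hbnot
      push_neg at hbnot
      rw [hvan b hbnot.1 hbnot.2 (mem_erase.mp hb).1, mul_zero]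
  · intro a ha haj
    apply Finset.sum_eq_zero
    intro b hb
    have : (∏ m ∈ (univ.erase i).erase a, (ζ i - ζ m)) = 0 := by
      apply Finset.prod_eq_zero (i := j)
      · rw [mem_erase, mem_erase]
        exact ⟨fun h => haj h.symm, hij.symm, mem_univ j⟩
      · rw [hζi, hζj, sub_self]
    rw [this, zero_mul, zero_mul]


lemma forward_main (A : Fin n → Fin n → Module.End ℂ V)
    (hA0 : ∀ i, A i i = 0) (hAsymm : ∀ i j, A i j = A j i)
    (H : ∀ z : Fin n → ℂ, Function.Injective z → ∀ u v : Fin n → ℂ,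
        omegaEnd n V A z u * omegaEnd n V A z v = omegaEnd n V A z v * omegaEnd n V A z u) :
    (∀ i j k l : Fin n, ({i, j} : Set (Fin n)) ∩ {k, l} = ∅ →
        A i j * A k l - A k l * A i j = 0) ∧
    (∀ i j k : Fin n, i ≠ j → j ≠ k → i ≠ k →
        A i j * (A i j + A j k + A k i) - (A i j + A j k + A k i) * A i j = 0) := by
  classical
  have part1 : ∀ i j k l : Fin n, i ≠ j → i ≠ k → i ≠ l → j ≠ k → j ≠ l → k ≠ l →
      A i j * A k l - A k l * A i j = 0 := by
    intro i j k l hij hik hil hjk hjl hkl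
    apply (Module.forall_dual_apply_eq_zero_iff ℂ _).mp
    intro φ
    exact forward_disjoint i j k l (fun a b => φ (A i a * A k b - A k b * A i a))
      (flat_scalar A hAsymm H i k φ) hij hik hil hjk hjl hkl
  constructor
  · intro i j k l hset
    rw [Set.eq_empty_iff_forall_notMem] at hset
    simp only [Set.mem_inter_iff, Set.mem_insert_iff, Set.mem_singleton_iff] at hset
    have hik : i ≠ k := fun e => hset i ⟨Or.inl rfl, Or.inl e⟩
    have hil : i ≠ l := fun e => hset i ⟨Or.inl rfl, Or.inr e⟩
    have hjk : j ≠ k := fun e => hset j ⟨Or.inr rfl, Or.inl e⟩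
    have hjl : j ≠ l := fun e => hset j ⟨Or.inr rfl, Or.inr e⟩
    by_cases hij : i = j
    · subst hij; rw [hA0]; simp
    · by_cases hkl : k = l
      · subst hkl; rw [hA0]; simp
      · exact part1 i j k l hij hik hil hjk hjl hkl
  · intro i j k hij hjk hik
    have key : A i j * (A k i + A k j) - (A k i + A k j) * A i j = 0 := by
      apply (Module.forall_dual_apply_eq_zero_iff ℂ _).mp
      intro φ
      have h := forward_triple i j k (fun a b => φ (A i a * A k b - A k b * A i a))
        (flat_scalar A hAsymm H i k φ)
        (fun b hb1 hb2 hb3 => by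
          show φ (A i j * A k b - A k b * A i j) = 0
          rw [part1 i j k b hij hik (Ne.symm hb1) hjk (Ne.symm hb2) (Ne.symm hb3), map_zero])
        hij hjk hik
      have e : A i j * (A k i + A k j) - (A k i + A k j) * A i j
          = (A i j * A k i - A k i * A i j) + (A i j * A k j - A k j * A i j) := by
        noncomm_ring
      rw [e, map_add]
      exact h
    have e2 : A i j * (A i j + A j k + A k i) - (A i j + A j k + A k i) * A i j
        = A i j * (A k i + A k j) - (A k i + A k j) * A i j := by
      rw [hAsymm j k]
      noncomm_ring
    rw [e2]
    exact key

def T3 (n : ℕ) : Finset (Fin n × Fin n × Fin n) :=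
  univ.filter (fun x => x.1 ≠ x.2.1 ∧ x.1 ≠ x.2.2 ∧ x.2.1 ≠ x.2.2)

lemma T3_reindex {M : Type*} [AddCommMonoid M] (F : Fin n × Fin n × Fin n → M)
    (m minv : Fin n × Fin n × Fin n → Fin n × Fin n × Fin n)
    (hmm : ∀ x, m (minv x) = x) (hmm' : ∀ x, minv (m x) = x)
    (hmem : ∀ x ∈ T3 n, minv x ∈ T3 n) (hmem' : ∀ x ∈ T3 n, m x ∈ T3 n) :
    ∑ x ∈ T3 n, F x = ∑ x ∈ T3 n, F (m x) := by
  apply Finset.sum_nbij' (i := minv) (j := m) hmem hmem'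
  · intro a _; exact hmm a
  · intro a _; exact hmm' a
  · intro a _; exact (congrArg F (hmm a)).symm

lemma Y_cyc (A : Fin n → Fin n → Module.End ℂ V)
    (rel2 : ∀ i j k : Fin n, i ≠ j → j ≠ k → i ≠ k →
      A i j * (A i j + A j k + A k i) - (A i j + A j k + A k i) * A i j = 0)
    (a b e : Fin n) (hab : a ≠ b) (hbe : b ≠ e) (hae : a ≠ e) :
    A b e * A e a - A e a * A b e = A a b * A b e - A b e * A a b := by
  have r2 := rel2 b e a hbe (Ne.symm hae) (Ne.symm hab)
  have bridge : (A b e * A e a - A e a * A b e) - (A a b * A b e - A b e * A a b)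
      = A b e * (A b e + A e a + A a b) - (A b e + A e a + A a b) * A b e := by
    noncomm_ring
  rw [r2] at bridge
  exact sub_eq_zero.mp bridge

lemma Y_swap23 (A : Fin n → Fin n → Module.End ℂ V)
    (hAsymm : ∀ i j, A i j = A j i)
    (rel2 : ∀ i j k : Fin n, i ≠ j → j ≠ k → i ≠ k →
      A i j * (A i j + A j k + A k i) - (A i j + A j k + A k i) * A i j = 0)
    (a b e : Fin n) (hab : a ≠ b) (hbe : b ≠ e) (hae : a ≠ e) :
    A a e * A e b - A e b * A a e = -(A a b * A b e - A b e * A a b) := by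
  have r2 := rel2 b e a hbe (Ne.symm hae) (Ne.symm hab)
  rw [hAsymm e a] at r2
  rw [hAsymm e b]
  have bridge : (A a e * A b e - A b e * A a e) - (-(A a b * A b e - A b e * A a b))
      = -(A b e * (A b e + A a e + A a b) - (A b e + A a e + A a b) * A b e) := by
    noncomm_ring
  rw [r2, neg_zero] at bridge
  exact sub_eq_zero.mp bridge


lemma arnold_core (a b c p q r p' q' r' : ℂ) (ha : a ≠ 0) (hb : b ≠ 0) (hc : c ≠ 0)
    (hrel : a = b - c) (hp : p = q - r) (hp' : p' = q' - r') :
    (p/a)*(q'/b) + (r/c)*(p'/a) + (q/b)*(r'/c)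
      - (q/b)*(p'/a) - (p/a)*(r'/c) - (r/c)*(q'/b) = 0 := by
  subst hrel hp hp'
  have d1 : (b-c)*b ≠ 0 := mul_ne_zero ha hb
  have d2 : c*(b-c) ≠ 0 := mul_ne_zero hc ha
  have d3 : b*c ≠ 0 := mul_ne_zero hb hc
  have d4 : b*(b-c) ≠ 0 := mul_ne_zero hb ha
  have d5 : (b-c)*c ≠ 0 := mul_ne_zero ha hc
  have d6 : c*b ≠ 0 := mul_ne_zero hc hb
  rw [div_mul_div_comm, div_mul_div_comm, div_mul_div_comm, div_mul_div_comm,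
    div_mul_div_comm, div_mul_div_comm]
  rw [div_add_div _ _ d1 d2, div_add_div _ _ (mul_ne_zero d1 d2) d3,
    div_sub_div _ _ (mul_ne_zero (mul_ne_zero d1 d2) d3) d4,
    div_sub_div _ _ (mul_ne_zero (mul_ne_zero (mul_ne_zero d1 d2) d3) d4) d5,
    div_sub_div _ _ (mul_ne_zero (mul_ne_zero (mul_ne_zero (mul_ne_zero d1 d2) d3) d4) d5) d6,
    div_eq_zero_iff]
  left
  ring

lemma arnold (z u v : Fin n → ℂ) (hz : Function.Injective z) (a b e : Fin n)
    (hab : a ≠ b) (hbe : b ≠ e) (hae : a ≠ e) :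
    fr z u a b * fr z v a e + fr z u b e * fr z v b a + fr z u e a * fr z v e b
    - fr z u a e * fr z v a b - fr z u b a * fr z v b e - fr z u e b * fr z v e a
    = 0 := by
  have h1 : z a - z b ≠ 0 := sub_ne_zero.mpr (fun h => hab (hz h))
  have h2 : z b - z e ≠ 0 := sub_ne_zero.mpr (fun h => hbe (hz h))
  have h3 : z a - z e ≠ 0 := sub_ne_zero.mpr (fun h => hae (hz h))
  rw [fr_symm z v a b, fr_symm z u a e, fr_symm z v b e, fr_symm z u a b,
      fr_symm z u b e, fr_symm z v a e]
  unfold fr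
  exact arnold_core (z a - z b) (z a - z e) (z b - z e)
    (u a - u b) (u a - u e) (u b - u e) (v a - v b) (v a - v e) (v b - v e)
    h1 h3 h2 (by ring) (by ring) (by ring)


-- [Aab, Aae] = -[Aab, Abe]
lemma X_eq_negY (A : Fin n → Fin n → Module.End ℂ V)
    (hAsymm : ∀ i j, A i j = A j i)
    (rel2 : ∀ i j k : Fin n, i ≠ j → j ≠ k → i ≠ k →
      A i j * (A i j + A j k + A k i) - (A i j + A j k + A k i) * A i j = 0)
    (a b e : Fin n) (hab : a ≠ b) (hbe : b ≠ e) (hae : a ≠ e) :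
    A a b * A a e - A a e * A a b = -(A a b * A b e - A b e * A a b) := by
  have r1 := rel2 a b e hab hbe hae
  rw [hAsymm e a] at r1
  have bridge : (A a b * A a e - A a e * A a b) - (-(A a b * A b e - A b e * A a b))
      = A a b * (A a b + A b e + A a e) - (A a b + A b e + A a e) * A a b := by
    noncomm_ring
  rw [r1] at bridge
  exact sub_eq_zero.mp bridge

-- Y(e,a,b) = Y(a,b,e)
lemma Y_cyc2 (A : Fin n → Fin n → Module.End ℂ V)
    (rel2 : ∀ i j k : Fin n, i ≠ j → j ≠ k → i ≠ k →
      A i j * (A i j + A j k + A k i) - (A i j + A j k + A k i) * A i j = 0)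
    (a b e : Fin n) (hab : a ≠ b) (hbe : b ≠ e) (hae : a ≠ e) :
    A e a * A a b - A a b * A e a = A a b * A b e - A b e * A a b :=
  (Y_cyc A rel2 e a b (Ne.symm hae) hab (Ne.symm hbe)).symm

-- Y(b,a,e) = -Y(a,b,e)
lemma Y_swap12 (A : Fin n → Fin n → Module.End ℂ V)
    (hAsymm : ∀ i j, A i j = A j i)
    (rel2 : ∀ i j k : Fin n, i ≠ j → j ≠ k → i ≠ k →
      A i j * (A i j + A j k + A k i) - (A i j + A j k + A k i) * A i j = 0)
    (a b e : Fin n) (hab : a ≠ b) (hbe : b ≠ e) (hae : a ≠ e) :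
    A b a * A a e - A a e * A b a = -(A a b * A b e - A b e * A a b) := by
  have h1 := Y_swap23 A hAsymm rel2 b e a hbe (Ne.symm hae) (Ne.symm hab)
  -- h1 : A b a * A a e - A a e * A b a = -(A b e * A e a - A e a * A b e)
  rw [Y_cyc A rel2 a b e hab hbe hae] at h1
  exact h1

-- Y(e,b,a) = -Y(a,b,e)
lemma Y_swap13 (A : Fin n → Fin n → Module.End ℂ V)
    (hAsymm : ∀ i j, A i j = A j i)
    (rel2 : ∀ i j k : Fin n, i ≠ j → j ≠ k → i ≠ k →
      A i j * (A i j + A j k + A k i) - (A i j + A j k + A k i) * A i j = 0)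
    (a b e : Fin n) (hab : a ≠ b) (hbe : b ≠ e) (hae : a ≠ e) :
    A e b * A b a - A b a * A e b = -(A a b * A b e - A b e * A a b) := by
  have h1 := Y_swap23 A hAsymm rel2 e a b (Ne.symm hae) hab (Ne.symm hbe)
  -- h1 : A e b * A b a - A b a * A e b = -(A e a * A a b - A a b * A e a)
  rw [Y_cyc2 A rel2 a b e hab hbe hae] at h1
  exact h1

lemma sum_s1_zero (A : Fin n → Fin n → Module.End ℂ V)
    (hAsymm : ∀ i j, A i j = A j i)
    (rel2 : ∀ i j k : Fin n, i ≠ j → j ≠ k → i ≠ k →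
      A i j * (A i j + A j k + A k i) - (A i j + A j k + A k i) * A i j = 0)
    (z u v : Fin n → ℂ) (hz : Function.Injective z) :
    ∑ x ∈ T3 n, (fr z u x.1 x.2.1 * fr z v x.1 x.2.2) •
      (A x.1 x.2.1 * A x.1 x.2.2 - A x.1 x.2.2 * A x.1 x.2.1) = 0 := by
  classical
  have step1 : ∑ x ∈ T3 n, (fr z u x.1 x.2.1 * fr z v x.1 x.2.2) •
      (A x.1 x.2.1 * A x.1 x.2.2 - A x.1 x.2.2 * A x.1 x.2.1)
      = -∑ x ∈ T3 n, (fr z u x.1 x.2.1 * fr z v x.1 x.2.2) •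
      (A x.1 x.2.1 * A x.2.1 x.2.2 - A x.2.1 x.2.2 * A x.1 x.2.1) := by
    rw [← Finset.sum_neg_distrib]
    apply Finset.sum_congr rfl
    intro x hx
    simp only [T3, mem_filter, mem_univ, true_and] at hx
    rw [X_eq_negY A hAsymm rel2 x.1 x.2.1 x.2.2 hx.1 hx.2.2 hx.2.1, smul_neg]
  rw [step1, neg_eq_zero]
  -- memberships for the five permutations
  have memρ : ∀ x ∈ T3 n, ((x.2.1, x.2.2, x.1) : Fin n × Fin n × Fin n) ∈ T3 n := by
    intro x hx
    simp only [T3, mem_filter, mem_univ, true_and] at hx ⊢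
    exact ⟨hx.2.2, Ne.symm hx.1, Ne.symm hx.2.1⟩
  have memρinv : ∀ x ∈ T3 n, ((x.2.2, x.1, x.2.1) : Fin n × Fin n × Fin n) ∈ T3 n := by
    intro x hx
    simp only [T3, mem_filter, mem_univ, true_and] at hx ⊢
    exact ⟨Ne.symm hx.2.1, Ne.symm hx.2.2, hx.1⟩
  have memσ23 : ∀ x ∈ T3 n, ((x.1, x.2.2, x.2.1) : Fin n × Fin n × Fin n) ∈ T3 n := by
    intro x hx
    simp only [T3, mem_filter, mem_univ, true_and] at hx ⊢
    exact ⟨hx.2.1, hx.1, Ne.symm hx.2.2⟩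
  have memσ12 : ∀ x ∈ T3 n, ((x.2.1, x.1, x.2.2) : Fin n × Fin n × Fin n) ∈ T3 n := by
    intro x hx
    simp only [T3, mem_filter, mem_univ, true_and] at hx ⊢
    exact ⟨Ne.symm hx.1, hx.2.2, hx.2.1⟩
  have memσ13 : ∀ x ∈ T3 n, ((x.2.2, x.2.1, x.1) : Fin n × Fin n × Fin n) ∈ T3 n := by
    intro x hx
    simp only [T3, mem_filter, mem_univ, true_and] at hx ⊢
    exact ⟨Ne.symm hx.2.2, Ne.symm hx.2.1, Ne.symm hx.1⟩
  -- the six reindexed forms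
  have E1 : ∑ x ∈ T3 n, (fr z u x.1 x.2.1 * fr z v x.1 x.2.2) •
        (A x.1 x.2.1 * A x.2.1 x.2.2 - A x.2.1 x.2.2 * A x.1 x.2.1)
      = ∑ x ∈ T3 n, (fr z u x.2.1 x.2.2 * fr z v x.2.1 x.1) •
        (A x.1 x.2.1 * A x.2.1 x.2.2 - A x.2.1 x.2.2 * A x.1 x.2.1) := by
    rw [T3_reindex (fun x => (fr z u x.1 x.2.1 * fr z v x.1 x.2.2) •
        (A x.1 x.2.1 * A x.2.1 x.2.2 - A x.2.1 x.2.2 * A x.1 x.2.1))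
      (fun x => (x.2.1, x.2.2, x.1)) (fun x => (x.2.2, x.1, x.2.1))
      (fun x => rfl) (fun x => rfl) memρinv memρ]
    apply Finset.sum_congr rfl
    intro x hx
    simp only [T3, mem_filter, mem_univ, true_and] at hx
    rw [Y_cyc A rel2 x.1 x.2.1 x.2.2 hx.1 hx.2.2 hx.2.1]
  have E2 : ∑ x ∈ T3 n, (fr z u x.1 x.2.1 * fr z v x.1 x.2.2) •
        (A x.1 x.2.1 * A x.2.1 x.2.2 - A x.2.1 x.2.2 * A x.1 x.2.1)
      = ∑ x ∈ T3 n, (fr z u x.2.2 x.1 * fr z v x.2.2 x.2.1) •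
        (A x.1 x.2.1 * A x.2.1 x.2.2 - A x.2.1 x.2.2 * A x.1 x.2.1) := by
    rw [T3_reindex (fun x => (fr z u x.1 x.2.1 * fr z v x.1 x.2.2) •
        (A x.1 x.2.1 * A x.2.1 x.2.2 - A x.2.1 x.2.2 * A x.1 x.2.1))
      (fun x => (x.2.2, x.1, x.2.1)) (fun x => (x.2.1, x.2.2, x.1))
      (fun x => rfl) (fun x => rfl) memρ memρinv]
    apply Finset.sum_congr rfl
    intro x hx
    simp only [T3, mem_filter, mem_univ, true_and] at hx
    rw [Y_cyc2 A rel2 x.1 x.2.1 x.2.2 hx.1 hx.2.2 hx.2.1]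
  have E3 : ∑ x ∈ T3 n, (fr z u x.1 x.2.2 * fr z v x.1 x.2.1) •
        (A x.1 x.2.1 * A x.2.1 x.2.2 - A x.2.1 x.2.2 * A x.1 x.2.1)
      = -∑ x ∈ T3 n, (fr z u x.1 x.2.1 * fr z v x.1 x.2.2) •
        (A x.1 x.2.1 * A x.2.1 x.2.2 - A x.2.1 x.2.2 * A x.1 x.2.1) := by
    rw [T3_reindex (fun x => (fr z u x.1 x.2.1 * fr z v x.1 x.2.2) •
        (A x.1 x.2.1 * A x.2.1 x.2.2 - A x.2.1 x.2.2 * A x.1 x.2.1))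
      (fun x => (x.1, x.2.2, x.2.1)) (fun x => (x.1, x.2.2, x.2.1))
      (fun x => rfl) (fun x => rfl) memσ23 memσ23]
    rw [← Finset.sum_neg_distrib]
    apply Finset.sum_congr rfl
    intro x hx
    simp only [T3, mem_filter, mem_univ, true_and] at hx
    rw [Y_swap23 A hAsymm rel2 x.1 x.2.1 x.2.2 hx.1 hx.2.2 hx.2.1, smul_neg, neg_neg]
  have E4 : ∑ x ∈ T3 n, (fr z u x.2.1 x.1 * fr z v x.2.1 x.2.2) •
        (A x.1 x.2.1 * A x.2.1 x.2.2 - A x.2.1 x.2.2 * A x.1 x.2.1)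
      = -∑ x ∈ T3 n, (fr z u x.1 x.2.1 * fr z v x.1 x.2.2) •
        (A x.1 x.2.1 * A x.2.1 x.2.2 - A x.2.1 x.2.2 * A x.1 x.2.1) := by
    rw [T3_reindex (fun x => (fr z u x.1 x.2.1 * fr z v x.1 x.2.2) •
        (A x.1 x.2.1 * A x.2.1 x.2.2 - A x.2.1 x.2.2 * A x.1 x.2.1))
      (fun x => (x.2.1, x.1, x.2.2)) (fun x => (x.2.1, x.1, x.2.2))
      (fun x => rfl) (fun x => rfl) memσ12 memσ12]
    rw [← Finset.sum_neg_distrib]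
    apply Finset.sum_congr rfl
    intro x hx
    simp only [T3, mem_filter, mem_univ, true_and] at hx
    rw [Y_swap12 A hAsymm rel2 x.1 x.2.1 x.2.2 hx.1 hx.2.2 hx.2.1, smul_neg, neg_neg]
  have E5 : ∑ x ∈ T3 n, (fr z u x.2.2 x.2.1 * fr z v x.2.2 x.1) •
        (A x.1 x.2.1 * A x.2.1 x.2.2 - A x.2.1 x.2.2 * A x.1 x.2.1)
      = -∑ x ∈ T3 n, (fr z u x.1 x.2.1 * fr z v x.1 x.2.2) •
        (A x.1 x.2.1 * A x.2.1 x.2.2 - A x.2.1 x.2.2 * A x.1 x.2.1) := by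
    rw [T3_reindex (fun x => (fr z u x.1 x.2.1 * fr z v x.1 x.2.2) •
        (A x.1 x.2.1 * A x.2.1 x.2.2 - A x.2.1 x.2.2 * A x.1 x.2.1))
      (fun x => (x.2.2, x.2.1, x.1)) (fun x => (x.2.2, x.2.1, x.1))
      (fun x => rfl) (fun x => rfl) memσ13 memσ13]
    rw [← Finset.sum_neg_distrib]
    apply Finset.sum_congr rfl
    intro x hx
    simp only [T3, mem_filter, mem_univ, true_and] at hx
    rw [Y_swap13 A hAsymm rel2 x.1 x.2.1 x.2.2 hx.1 hx.2.2 hx.2.1, smul_neg, neg_neg]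
  -- the Arnold combination
  have hAlt : ∑ x ∈ T3 n,
      ((fr z u x.1 x.2.1 * fr z v x.1 x.2.2 + fr z u x.2.1 x.2.2 * fr z v x.2.1 x.1
        + fr z u x.2.2 x.1 * fr z v x.2.2 x.2.1 - fr z u x.1 x.2.2 * fr z v x.1 x.2.1
        - fr z u x.2.1 x.1 * fr z v x.2.1 x.2.2 - fr z u x.2.2 x.2.1 * fr z v x.2.2 x.1)) •
      (A x.1 x.2.1 * A x.2.1 x.2.2 - A x.2.1 x.2.2 * A x.1 x.2.1) = 0 := by
    apply Finset.sum_eq_zero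
    intro x hx
    simp only [T3, mem_filter, mem_univ, true_and] at hx
    rw [arnold z u v hz x.1 x.2.1 x.2.2 hx.1 hx.2.2 hx.2.1, zero_smul]
  simp only [add_smul, sub_smul] at hAlt
  rw [Finset.sum_sub_distrib, Finset.sum_sub_distrib, Finset.sum_sub_distrib,
    Finset.sum_add_distrib, Finset.sum_add_distrib] at hAlt
  rw [← E1, ← E2, E3, E4, E5] at hAlt
  -- hAlt : S + S + S - -S - -S - -S = 0
  set S := ∑ x ∈ T3 n, (fr z u x.1 x.2.1 * fr z v x.1 x.2.2) •
    (A x.1 x.2.1 * A x.2.1 x.2.2 - A x.2.1 x.2.2 * A x.1 x.2.1) with hSdef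
  have h6 : (6 : ℂ) • S = 0 := by
    rw [show (6 : ℂ) = 1 + 1 + 1 + 1 + 1 + 1 by norm_num]
    simp only [add_smul, one_smul]
    calc S + S + S + S + S + S = S + S + S - -S - -S - -S := by abel
    _ = 0 := hAlt
  have h7 : ((6 : ℂ)⁻¹ * 6) • S = (0 : Module.End ℂ V) := by rw [mul_smul, h6, smul_zero]
  norm_num at h7
  exact h7

lemma main4 (A : Fin n → Fin n → Module.End ℂ V)
    (hAsymm : ∀ i j, A i j = A j i)
    (rel1 : ∀ a b c d : Fin n, c ≠ a → c ≠ b → d ≠ a → d ≠ b →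
      A a b * A c d - A c d * A a b = 0)
    (rel2 : ∀ i j k : Fin n, i ≠ j → j ≠ k → i ≠ k →
      A i j * (A i j + A j k + A k i) - (A i j + A j k + A k i) * A i j = 0)
    (z u v : Fin n → ℂ) (hz : Function.Injective z) :
    ∑ r : (Fin n × Fin n) × (Fin n × Fin n),
      (fr z u r.1.1 r.1.2 * fr z v r.2.1 r.2.2) •
      (A r.1.1 r.1.2 * A r.2.1 r.2.2 - A r.2.1 r.2.2 * A r.1.1 r.1.2) = 0 := by
  classical
  have hnot : ∀ r : (Fin n × Fin n) × (Fin n × Fin n),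
      ¬((r.1.1 ≠ r.1.2 ∧ r.2.1 ≠ r.2.2 ∧ r.2.1 = r.1.1 ∧ r.2.2 ≠ r.1.2) ∨
        (r.1.1 ≠ r.1.2 ∧ r.2.1 ≠ r.2.2 ∧ r.2.1 = r.1.2 ∧ r.2.2 ≠ r.1.1) ∨
        (r.1.1 ≠ r.1.2 ∧ r.2.1 ≠ r.2.2 ∧ r.2.2 = r.1.1 ∧ r.2.1 ≠ r.1.2) ∨
        (r.1.1 ≠ r.1.2 ∧ r.2.1 ≠ r.2.2 ∧ r.2.2 = r.1.2 ∧ r.2.1 ≠ r.1.1)) →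
      (fr z u r.1.1 r.1.2 * fr z v r.2.1 r.2.2) •
      (A r.1.1 r.1.2 * A r.2.1 r.2.2 - A r.2.1 r.2.2 * A r.1.1 r.1.2) = 0 := by
    rintro ⟨⟨a, b⟩, c, d⟩ hr
    simp only at hr ⊢
    by_cases hab : a = b
    · simp [hab, fr_self]
    by_cases hcd : c = d
    · simp [hcd, fr_self]
    by_cases hca : c = a
    · by_cases hdb : d = b
      · rw [hca, hdb]; simp
      · exact absurd (Or.inl ⟨hab, hcd, hca, hdb⟩) hr
    by_cases hcb : c = b
    · by_cases hda : d = a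
      · rw [hcb, hda, hAsymm b a]; simp
      · exact absurd (Or.inr (Or.inl ⟨hab, hcd, hcb, hda⟩)) hr
    by_cases hda : d = a
    · exact absurd (Or.inr (Or.inr (Or.inl ⟨hab, hcd, hda, hcb⟩))) hr
    by_cases hdb : d = b
    · exact absurd (Or.inr (Or.inr (Or.inr ⟨hab, hcd, hdb, hca⟩))) hr
    · rw [rel1 a b c d hca hcb hda hdb, smul_zero]
  have hsplit := Finset.sum_filter_add_sum_filter_not
    (univ : Finset ((Fin n × Fin n) × (Fin n × Fin n)))
    (fun r => (r.1.1 ≠ r.1.2 ∧ r.2.1 ≠ r.2.2 ∧ r.2.1 = r.1.1 ∧ r.2.2 ≠ r.1.2) ∨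
        (r.1.1 ≠ r.1.2 ∧ r.2.1 ≠ r.2.2 ∧ r.2.1 = r.1.2 ∧ r.2.2 ≠ r.1.1) ∨
        (r.1.1 ≠ r.1.2 ∧ r.2.1 ≠ r.2.2 ∧ r.2.2 = r.1.1 ∧ r.2.1 ≠ r.1.2) ∨
        (r.1.1 ≠ r.1.2 ∧ r.2.1 ≠ r.2.2 ∧ r.2.2 = r.1.2 ∧ r.2.1 ≠ r.1.1))
    (fun r => (fr z u r.1.1 r.1.2 * fr z v r.2.1 r.2.2) •
      (A r.1.1 r.1.2 * A r.2.1 r.2.2 - A r.2.1 r.2.2 * A r.1.1 r.1.2))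
  rw [Finset.sum_eq_zero (fun r hr => hnot r (mem_filter.mp hr).2), add_zero] at hsplit
  rw [← hsplit]
  rw [Finset.filter_or, Finset.filter_or, Finset.filter_or]
  -- disjointness
  have d12 : Disjoint (univ.filter (fun r : (Fin n × Fin n) × (Fin n × Fin n) =>
      r.1.1 ≠ r.1.2 ∧ r.2.1 ≠ r.2.2 ∧ r.2.1 = r.1.1 ∧ r.2.2 ≠ r.1.2))
      (univ.filter (fun r => r.1.1 ≠ r.1.2 ∧ r.2.1 ≠ r.2.2 ∧ r.2.1 = r.1.2 ∧ r.2.2 ≠ r.1.1)) := by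
    rw [Finset.disjoint_left]
    intro r h1 h2
    simp only [mem_filter, mem_univ, true_and] at h1 h2
    exact h1.1 (h1.2.2.1.symm.trans h2.2.2.1)
  have d13 : Disjoint (univ.filter (fun r : (Fin n × Fin n) × (Fin n × Fin n) =>
      r.1.1 ≠ r.1.2 ∧ r.2.1 ≠ r.2.2 ∧ r.2.1 = r.1.1 ∧ r.2.2 ≠ r.1.2))
      (univ.filter (fun r => r.1.1 ≠ r.1.2 ∧ r.2.1 ≠ r.2.2 ∧ r.2.2 = r.1.1 ∧ r.2.1 ≠ r.1.2)) := by
    rw [Finset.disjoint_left]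
    intro r h1 h2
    simp only [mem_filter, mem_univ, true_and] at h1 h2
    exact h1.2.1 (h1.2.2.1.trans h2.2.2.1.symm)
  have d14 : Disjoint (univ.filter (fun r : (Fin n × Fin n) × (Fin n × Fin n) =>
      r.1.1 ≠ r.1.2 ∧ r.2.1 ≠ r.2.2 ∧ r.2.1 = r.1.1 ∧ r.2.2 ≠ r.1.2))
      (univ.filter (fun r => r.1.1 ≠ r.1.2 ∧ r.2.1 ≠ r.2.2 ∧ r.2.2 = r.1.2 ∧ r.2.1 ≠ r.1.1)) := by
    rw [Finset.disjoint_left]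
    intro r h1 h2
    simp only [mem_filter, mem_univ, true_and] at h1 h2
    exact h1.2.2.2 h2.2.2.1
  have d23 : Disjoint (univ.filter (fun r : (Fin n × Fin n) × (Fin n × Fin n) =>
      r.1.1 ≠ r.1.2 ∧ r.2.1 ≠ r.2.2 ∧ r.2.1 = r.1.2 ∧ r.2.2 ≠ r.1.1))
      (univ.filter (fun r => r.1.1 ≠ r.1.2 ∧ r.2.1 ≠ r.2.2 ∧ r.2.2 = r.1.1 ∧ r.2.1 ≠ r.1.2)) := by
    rw [Finset.disjoint_left]
    intro r h1 h2
    simp only [mem_filter, mem_univ, true_and] at h1 h2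
    exact h2.2.2.2 h1.2.2.1
  have d24 : Disjoint (univ.filter (fun r : (Fin n × Fin n) × (Fin n × Fin n) =>
      r.1.1 ≠ r.1.2 ∧ r.2.1 ≠ r.2.2 ∧ r.2.1 = r.1.2 ∧ r.2.2 ≠ r.1.1))
      (univ.filter (fun r => r.1.1 ≠ r.1.2 ∧ r.2.1 ≠ r.2.2 ∧ r.2.2 = r.1.2 ∧ r.2.1 ≠ r.1.1)) := by
    rw [Finset.disjoint_left]
    intro r h1 h2
    simp only [mem_filter, mem_univ, true_and] at h1 h2
    exact h1.2.1 (h1.2.2.1.trans h2.2.2.1.symm)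
  have d34 : Disjoint (univ.filter (fun r : (Fin n × Fin n) × (Fin n × Fin n) =>
      r.1.1 ≠ r.1.2 ∧ r.2.1 ≠ r.2.2 ∧ r.2.2 = r.1.1 ∧ r.2.1 ≠ r.1.2))
      (univ.filter (fun r => r.1.1 ≠ r.1.2 ∧ r.2.1 ≠ r.2.2 ∧ r.2.2 = r.1.2 ∧ r.2.1 ≠ r.1.1)) := by
    rw [Finset.disjoint_left]
    intro r h1 h2
    simp only [mem_filter, mem_univ, true_and] at h1 h2
    exact h1.1 (h1.2.2.1.symm.trans h2.2.2.1)
  rw [Finset.sum_union (Finset.disjoint_union_right.mpr ⟨d12,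
      Finset.disjoint_union_right.mpr ⟨d13, d14⟩⟩),
    Finset.sum_union (Finset.disjoint_union_right.mpr ⟨d23, d24⟩),
    Finset.sum_union d34]
  -- four bijections to T3
  have hQ1 : ∑ r ∈ univ.filter (fun r : (Fin n × Fin n) × (Fin n × Fin n) =>
        r.1.1 ≠ r.1.2 ∧ r.2.1 ≠ r.2.2 ∧ r.2.1 = r.1.1 ∧ r.2.2 ≠ r.1.2),
      (fr z u r.1.1 r.1.2 * fr z v r.2.1 r.2.2) •
      (A r.1.1 r.1.2 * A r.2.1 r.2.2 - A r.2.1 r.2.2 * A r.1.1 r.1.2)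
      = ∑ x ∈ T3 n, (fr z u x.1 x.2.1 * fr z v x.1 x.2.2) •
        (A x.1 x.2.1 * A x.1 x.2.2 - A x.1 x.2.2 * A x.1 x.2.1) := by
    refine Finset.sum_nbij' (i := fun r : (Fin n × Fin n) × (Fin n × Fin n) =>
        (r.1.1, r.1.2, r.2.2))
      (j := fun x : Fin n × Fin n × Fin n => ((x.1, x.2.1), (x.1, x.2.2))) ?_ ?_ ?_ ?_ ?_
    · intro r hr
      simp only [mem_filter, mem_univ, true_and] at hr
      simp only [T3, mem_filter, mem_univ, true_and]
      exact ⟨hr.1, fun h => hr.2.1 (hr.2.2.1.trans h), fun h => hr.2.2.2 h.symm⟩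
    · intro x hx
      simp only [T3, mem_filter, mem_univ, true_and] at hx
      simp only [mem_filter, mem_univ, true_and]
      exact ⟨hx.1, hx.2.1, fun h => hx.2.2 h.symm⟩
    · intro r hr
      simp only [mem_filter, mem_univ, true_and] at hr
      simp [Prod.ext_iff, hr.2.2.1]
    · intro x _; rfl
    · intro r hr
      simp only [mem_filter, mem_univ, true_and] at hr
      rw [hr.2.2.1]
  have hQ2 : ∑ r ∈ univ.filter (fun r : (Fin n × Fin n) × (Fin n × Fin n) =>
        r.1.1 ≠ r.1.2 ∧ r.2.1 ≠ r.2.2 ∧ r.2.1 = r.1.2 ∧ r.2.2 ≠ r.1.1),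
      (fr z u r.1.1 r.1.2 * fr z v r.2.1 r.2.2) •
      (A r.1.1 r.1.2 * A r.2.1 r.2.2 - A r.2.1 r.2.2 * A r.1.1 r.1.2)
      = ∑ x ∈ T3 n, (fr z u x.1 x.2.1 * fr z v x.2.1 x.2.2) •
        (A x.1 x.2.1 * A x.2.1 x.2.2 - A x.2.1 x.2.2 * A x.1 x.2.1) := by
    refine Finset.sum_nbij' (i := fun r : (Fin n × Fin n) × (Fin n × Fin n) =>
        (r.1.1, r.1.2, r.2.2))
      (j := fun x : Fin n × Fin n × Fin n => ((x.1, x.2.1), (x.2.1, x.2.2))) ?_ ?_ ?_ ?_ ?_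
    · intro r hr
      simp only [mem_filter, mem_univ, true_and] at hr
      simp only [T3, mem_filter, mem_univ, true_and]
      exact ⟨hr.1, fun h => hr.2.2.2 h.symm, fun h => hr.2.1 (hr.2.2.1.trans h)⟩
    · intro x hx
      simp only [T3, mem_filter, mem_univ, true_and] at hx
      simp only [mem_filter, mem_univ, true_and]
      exact ⟨hx.1, hx.2.2, fun h => hx.2.1 h.symm⟩
    · intro r hr
      simp only [mem_filter, mem_univ, true_and] at hr
      simp [Prod.ext_iff, hr.2.2.1]
    · intro x _; rfl
    · intro r hr
      simp only [mem_filter, mem_univ, true_and] at hr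
      rw [hr.2.2.1]
  have hQ3 : ∑ r ∈ univ.filter (fun r : (Fin n × Fin n) × (Fin n × Fin n) =>
        r.1.1 ≠ r.1.2 ∧ r.2.1 ≠ r.2.2 ∧ r.2.2 = r.1.1 ∧ r.2.1 ≠ r.1.2),
      (fr z u r.1.1 r.1.2 * fr z v r.2.1 r.2.2) •
      (A r.1.1 r.1.2 * A r.2.1 r.2.2 - A r.2.1 r.2.2 * A r.1.1 r.1.2)
      = ∑ x ∈ T3 n, (fr z u x.1 x.2.1 * fr z v x.2.2 x.1) •
        (A x.1 x.2.1 * A x.2.2 x.1 - A x.2.2 x.1 * A x.1 x.2.1) := by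
    refine Finset.sum_nbij' (i := fun r : (Fin n × Fin n) × (Fin n × Fin n) =>
        (r.1.1, r.1.2, r.2.1))
      (j := fun x : Fin n × Fin n × Fin n => ((x.1, x.2.1), (x.2.2, x.1))) ?_ ?_ ?_ ?_ ?_
    · intro r hr
      simp only [mem_filter, mem_univ, true_and] at hr
      simp only [T3, mem_filter, mem_univ, true_and]
      exact ⟨hr.1, fun h => hr.2.1 (h.symm.trans hr.2.2.1.symm), fun h => hr.2.2.2 h.symm⟩
    · intro x hx
      simp only [T3, mem_filter, mem_univ, true_and] at hx
      simp only [mem_filter, mem_univ, true_and]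
      exact ⟨hx.1, fun h => hx.2.1 h.symm, fun h => hx.2.2 h.symm⟩
    · intro r hr
      simp only [mem_filter, mem_univ, true_and] at hr
      simp [Prod.ext_iff, hr.2.2.1]
    · intro x _; rfl
    · intro r hr
      simp only [mem_filter, mem_univ, true_and] at hr
      rw [hr.2.2.1]
  have hQ4 : ∑ r ∈ univ.filter (fun r : (Fin n × Fin n) × (Fin n × Fin n) =>
        r.1.1 ≠ r.1.2 ∧ r.2.1 ≠ r.2.2 ∧ r.2.2 = r.1.2 ∧ r.2.1 ≠ r.1.1),
      (fr z u r.1.1 r.1.2 * fr z v r.2.1 r.2.2) •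
      (A r.1.1 r.1.2 * A r.2.1 r.2.2 - A r.2.1 r.2.2 * A r.1.1 r.1.2)
      = ∑ x ∈ T3 n, (fr z u x.1 x.2.1 * fr z v x.2.2 x.2.1) •
        (A x.1 x.2.1 * A x.2.2 x.2.1 - A x.2.2 x.2.1 * A x.1 x.2.1) := by
    refine Finset.sum_nbij' (i := fun r : (Fin n × Fin n) × (Fin n × Fin n) =>
        (r.1.1, r.1.2, r.2.1))
      (j := fun x : Fin n × Fin n × Fin n => ((x.1, x.2.1), (x.2.2, x.2.1))) ?_ ?_ ?_ ?_ ?_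
    · intro r hr
      simp only [mem_filter, mem_univ, true_and] at hr
      simp only [T3, mem_filter, mem_univ, true_and]
      exact ⟨hr.1, fun h => hr.2.2.2 h.symm, fun h => hr.2.1 (h.symm.trans hr.2.2.1.symm)⟩
    · intro x hx
      simp only [T3, mem_filter, mem_univ, true_and] at hx
      simp only [mem_filter, mem_univ, true_and]
      exact ⟨hx.1, fun h => hx.2.2 h.symm, fun h => hx.2.1 h.symm⟩
    · intro r hr
      simp only [mem_filter, mem_univ, true_and] at hr
      simp [Prod.ext_iff, hr.2.2.1]
    · intro x _; rfl
    · intro r hr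
      simp only [mem_filter, mem_univ, true_and] at hr
      rw [hr.2.2.1]
  rw [hQ1, hQ2, hQ3, hQ4]
  -- pointwise conversions s3 -> s1, s4 -> s2
  have hs3 : ∑ x ∈ T3 n, (fr z u x.1 x.2.1 * fr z v x.2.2 x.1) •
        (A x.1 x.2.1 * A x.2.2 x.1 - A x.2.2 x.1 * A x.1 x.2.1)
      = ∑ x ∈ T3 n, (fr z u x.1 x.2.1 * fr z v x.1 x.2.2) •
        (A x.1 x.2.1 * A x.1 x.2.2 - A x.1 x.2.2 * A x.1 x.2.1) := by
    apply Finset.sum_congr rfl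
    intro x _
    rw [fr_symm z v x.1 x.2.2, hAsymm x.2.2 x.1]
  have hs4 : ∑ x ∈ T3 n, (fr z u x.1 x.2.1 * fr z v x.2.2 x.2.1) •
        (A x.1 x.2.1 * A x.2.2 x.2.1 - A x.2.2 x.2.1 * A x.1 x.2.1)
      = ∑ x ∈ T3 n, (fr z u x.1 x.2.1 * fr z v x.2.1 x.2.2) •
        (A x.1 x.2.1 * A x.2.1 x.2.2 - A x.2.1 x.2.2 * A x.1 x.2.1) := by
    apply Finset.sum_congr rfl
    intro x _
    rw [fr_symm z v x.2.1 x.2.2, hAsymm x.2.2 x.2.1]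
  have memσ12 : ∀ x ∈ T3 n, ((x.2.1, x.1, x.2.2) : Fin n × Fin n × Fin n) ∈ T3 n := by
    intro x hx
    simp only [T3, mem_filter, mem_univ, true_and] at hx ⊢
    exact ⟨Ne.symm hx.1, hx.2.2, hx.2.1⟩
  have hs2 : ∑ x ∈ T3 n, (fr z u x.1 x.2.1 * fr z v x.2.1 x.2.2) •
        (A x.1 x.2.1 * A x.2.1 x.2.2 - A x.2.1 x.2.2 * A x.1 x.2.1)
      = ∑ x ∈ T3 n, (fr z u x.1 x.2.1 * fr z v x.1 x.2.2) •
        (A x.1 x.2.1 * A x.1 x.2.2 - A x.1 x.2.2 * A x.1 x.2.1) := by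
    rw [T3_reindex (fun x : Fin n × Fin n × Fin n =>
        (fr z u x.1 x.2.1 * fr z v x.2.1 x.2.2) •
        (A x.1 x.2.1 * A x.2.1 x.2.2 - A x.2.1 x.2.2 * A x.1 x.2.1))
      (fun x => (x.2.1, x.1, x.2.2)) (fun x => (x.2.1, x.1, x.2.2))
      (fun x => rfl) (fun x => rfl) memσ12 memσ12]
    apply Finset.sum_congr rfl
    intro x _
    rw [fr_symm z u x.1 x.2.1, hAsymm x.2.1 x.1]
  rw [hs3, hs4, hs2]
  rw [sum_s1_zero A hAsymm rel2 z u v hz]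
  simp

lemma reverse_main (A : Fin n → Fin n → Module.End ℂ V)
    (hAsymm : ∀ i j, A i j = A j i)
    (rel1 : ∀ a b c d : Fin n, c ≠ a → c ≠ b → d ≠ a → d ≠ b →
      A a b * A c d - A c d * A a b = 0)
    (rel2 : ∀ i j k : Fin n, i ≠ j → j ≠ k → i ≠ k →
      A i j * (A i j + A j k + A k i) - (A i j + A j k + A k i) * A i j = 0)
    (z : Fin n → ℂ) (hz : Function.Injective z) (u v : Fin n → ℂ) :
    omegaEnd n V A z u * omegaEnd n V A z v = omegaEnd n V A z v * omegaEnd n V A z u := by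
  classical
  have m4 := main4 A hAsymm rel1 rel2 z u v hz
  rw [Fintype.sum_prod_type] at m4
  have key : ((2:ℂ) • omegaEnd n V A z u) * ((2:ℂ) • omegaEnd n V A z v)
      - ((2:ℂ) • omegaEnd n V A z v) * ((2:ℂ) • omegaEnd n V A z u) = 0 := by
    rw [two_smul_omega A hAsymm z u, two_smul_omega A hAsymm z v]
    rw [sum_smul_mul_sum_smul (V := V) univ univ
      (fun p : Fin n × Fin n => fr z u p.1 p.2) (fun q : Fin n × Fin n => fr z v q.1 q.2)
      (fun p => A p.1 p.2) (fun q => A q.1 q.2),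
      sum_smul_mul_sum_smul (V := V) univ univ
      (fun p : Fin n × Fin n => fr z v p.1 p.2) (fun q : Fin n × Fin n => fr z u q.1 q.2)
      (fun p => A p.1 p.2) (fun q => A q.1 q.2)]
    have swap2 : ∑ p : Fin n × Fin n, ∑ q : Fin n × Fin n,
        (fr z v p.1 p.2 * fr z u q.1 q.2) • (A p.1 p.2 * A q.1 q.2)
        = ∑ p : Fin n × Fin n, ∑ q : Fin n × Fin n,
        (fr z u p.1 p.2 * fr z v q.1 q.2) • (A q.1 q.2 * A p.1 p.2) := by
      rw [Finset.sum_comm]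
      exact Finset.sum_congr rfl fun p _ => Finset.sum_congr rfl fun q _ => by rw [mul_comm]
    rw [swap2, ← Finset.sum_sub_distrib]
    have inner : ∀ p : Fin n × Fin n,
        ((∑ q : Fin n × Fin n, (fr z u p.1 p.2 * fr z v q.1 q.2) • (A p.1 p.2 * A q.1 q.2))
        - ∑ q : Fin n × Fin n, (fr z u p.1 p.2 * fr z v q.1 q.2) • (A q.1 q.2 * A p.1 p.2))
        = ∑ q : Fin n × Fin n, (fr z u p.1 p.2 * fr z v q.1 q.2) •
          (A p.1 p.2 * A q.1 q.2 - A q.1 q.2 * A p.1 p.2) := by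
      intro p
      rw [← Finset.sum_sub_distrib]
      exact Finset.sum_congr rfl fun q _ => (smul_sub _ _ _).symm
    rw [Finset.sum_congr rfl fun p _ => inner p]
    exact m4
  have e4 : ∀ X Y : Module.End ℂ V, ((2:ℂ) • X) * ((2:ℂ) • Y) = (4:ℂ) • (X * Y) := by
    intro X Y
    rw [smul_mul_smul_comm]
    norm_num
  rw [e4, e4, ← smul_sub] at key
  have h40 : (4:ℂ) ≠ 0 := by norm_num
  have hfin := smul_right_injective (Module.End ℂ V) h40
    (key.trans (smul_zero (4:ℂ)).symm)
  exact sub_eq_zero.mp hfin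

end Kohno

/-- Kohno's lemma: the connection `d - ω` on the trivial `V`-bundle over `ℂⁿ_*` is flat
(equivalently, `ω_z(u)` and `ω_z(v)` commute for all `z` with pairwise distinct
coordinates and all `u, v`) if and only if the `A_{ij}` satisfy the infinitesimal braid
relations. -/
theorem flat_iff_infinitesimal_braid_relations
    (n : ℕ) (V : Type*) [AddCommGroup V] [Module ℂ V] [FiniteDimensional ℂ V]
    (A : Fin n → Fin n → Module.End ℂ V)
    (hA0 : ∀ i, A i i = 0) (hAsymm : ∀ i j, A i j = A j i) :
    (∀ z : Fin n → ℂ, Function.Injective z → ∀ u v : Fin n → ℂ,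
        omegaEnd n V A z u * omegaEnd n V A z v = omegaEnd n V A z v * omegaEnd n V A z u)
    ↔ ((∀ i j k l : Fin n, ({i, j} : Set (Fin n)) ∩ {k, l} = ∅ →
          A i j * A k l - A k l * A i j = 0) ∧
        (∀ i j k : Fin n, i ≠ j → j ≠ k → i ≠ k →
          A i j * (A i j + A j k + A k i) - (A i j + A j k + A k i) * A i j = 0)) := by
  constructor
  · intro H
    exact Kohno.forward_main A hA0 hAsymm H
  · rintro ⟨h1, h2⟩ z hz u v
    have rel1 : ∀ a b c d : Fin n, c ≠ a → c ≠ b → d ≠ a → d ≠ b →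
        A a b * A c d - A c d * A a b = 0 := by
      intro a b c d hca hcb hda hdb
      apply h1
      rw [Set.eq_empty_iff_forall_notMem]
      rintro x ⟨hx1, hx2⟩
      simp only [Set.mem_insert_iff, Set.mem_singleton_iff] at hx1 hx2
      rcases hx1 with h | h <;> rcases hx2 with h' | h'
      · exact hca (h'.symm.trans h)
      · exact hda (h'.symm.trans h)
      · exact hcb (h'.symm.trans h)
      · exact hdb (h'.symm.trans h)
    exact Kohno.reverse_main A hAsymm rel1 h2 z hz u v
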